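/- The Eulerian number E(k,n), counting permutations of {1,...,n} with exactly k weak excedences, satisfies E(k,n) = ∑_{i=0}^{k} (-1)^i * C(n+1, i) * (k-i)^n. -/

import Mathlib

open Finset Equiv

def weakExcedences {n : ℕ} (π : Equiv.Perm (Fin n)) : ℕ :=
  (Finset.univ.filter fun i : Fin n => i ≤ π i).card

namespace EulerAux

variable {n : ℕ}

/-- Extend a permutation of `Fin n` to `Fin (n+1)` fixing the last point. -/
def extLast (σ : Perm (Fin n)) : Perm (Fin (n + 1)) :=
  (finSuccEquivLast (n := n)).symm.permCongr σ.optionCongr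

@[simp] lemma extLast_castSucc (σ : Perm (Fin n)) (i : Fin n) :
    extLast σ i.castSucc = (σ i).castSucc := by
  simp [extLast, Equiv.permCongr_apply]

@[simp] lemma extLast_last (σ : Perm (Fin n)) : extLast σ (Fin.last n) = Fin.last n := by
  simp [extLast, Equiv.permCongr_apply]

lemma extLast_eq_last_iff (σ : Perm (Fin n)) (x : Fin (n + 1)) :
    extLast σ x = Fin.last n ↔ x = Fin.last n := by
  constructor
  · intro h
    rcases Fin.eq_castSucc_or_eq_last x with ⟨i, rfl⟩ | rfl
    · rw [extLast_castSucc] at h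
      exact absurd h (Fin.castSucc_lt_last _).ne
    · rfl
  · rintro rfl; simp

/-- Insert the last point into the cycle of `σ` "after `j`" (`j = last` means a fixed point). -/
def ins (σ : Perm (Fin n)) (j : Fin (n + 1)) : Perm (Fin (n + 1)) :=
  extLast σ * Equiv.swap j (Fin.last n)

lemma ins_injective : Function.Injective (fun p : Perm (Fin n) × Fin (n + 1) => ins p.1 p.2) := by
  rintro ⟨σ, j⟩ ⟨σ', j'⟩ h
  simp only at h
  have key : ∀ (τ : Perm (Fin n)) (t x : Fin (n + 1)), ins τ t x = Fin.last n ↔ x = t := by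
    intro τ t x
    rw [ins, Equiv.Perm.mul_apply, extLast_eq_last_iff, Equiv.apply_eq_iff_eq_symm_apply]
    simp
  have hj : j = j' := by
    have h1 : ins σ j j = Fin.last n := (key σ j j).2 rfl
    rw [h] at h1; exact (key σ' j' j).1 h1
  subst hj
  have h2 : extLast σ = extLast σ' := by
    have := congrArg (· * Equiv.swap j (Fin.last n)) h
    simpa [ins, mul_assoc] using this
  refine Prod.ext ?_ rfl
  ext i
  have := congrArg (fun τ : Perm (Fin (n+1)) => τ i.castSucc) h2
  simp only [extLast_castSucc] at this
  exact congrArg Fin.val (Fin.castSucc_injective _ this)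

lemma ins_bijective :
    Function.Bijective (fun p : Perm (Fin n) × Fin (n + 1) => ins p.1 p.2) := by
  rw [Fintype.bijective_iff_injective_and_card]
  refine ⟨ins_injective, ?_⟩
  simp [Fintype.card_perm, Nat.factorial_succ, mul_comm]

lemma card_filter_castSucc (P : Fin (n + 1) → Prop) [DecidablePred P] :
    (univ.filter P).card
      = (univ.filter fun i : Fin n => P i.castSucc).card + (if P (Fin.last n) then 1 else 0) := by
  rw [Fin.univ_castSuccEmb, filter_cons, apply_ite Finset.card, card_cons, filter_map, card_map]
  have hc : (univ.filter (P ∘ ⇑Fin.castSuccEmb)).card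
      = (univ.filter fun i : Fin n => P i.castSucc).card :=
    congrArg Finset.card (Finset.filter_congr fun i _ => Iff.rfl)
  split_ifs <;> omega

lemma wE_ins_last (σ : Perm (Fin n)) :
    weakExcedences (ins σ (Fin.last n)) = weakExcedences σ + 1 := by
  have h : ins σ (Fin.last n) = extLast σ := by
    simp [ins, Equiv.swap_self, mul_one]; rfl
  rw [h, weakExcedences, card_filter_castSucc]
  simp [Fin.castSucc_le_castSucc_iff, weakExcedences]

lemma ins_apply_self (σ : Perm (Fin n)) (j : Fin (n + 1)) : ins σ j j = Fin.last n := by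
  simp [ins]

lemma ins_apply_last (σ : Perm (Fin n)) (i₀ : Fin n) :
    ins σ i₀.castSucc (Fin.last n) = (σ i₀).castSucc := by
  simp [ins, Equiv.swap_apply_right]

lemma ins_apply_other (σ : Perm (Fin n)) (j x : Fin (n + 1)) (h1 : x ≠ j) (h2 : x ≠ Fin.last n) :
    ins σ j x = extLast σ x := by
  simp [ins, Equiv.swap_apply_of_ne_of_ne h1 h2]

lemma wE_ins_castSucc (σ : Perm (Fin n)) (i₀ : Fin n) :
    weakExcedences (ins σ i₀.castSucc)
      = if i₀ ≤ σ i₀ then weakExcedences σ else weakExcedences σ + 1 := by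
  rw [weakExcedences, card_filter_castSucc]
  have hlast : ¬ (Fin.last n ≤ ins σ i₀.castSucc (Fin.last n)) := by
    rw [ins_apply_last]
    exact not_le.2 (Fin.castSucc_lt_last _)
  rw [if_neg hlast, add_zero]
  have hcong : (univ.filter fun i : Fin n => i.castSucc ≤ ins σ i₀.castSucc i.castSucc)
      = univ.filter fun i : Fin n => i = i₀ ∨ i ≤ σ i := by
    apply filter_congr
    intro i _
    rcases eq_or_ne i i₀ with rfl | hne
    · simp [ins_apply_self, Fin.le_last]
    · rw [ins_apply_other σ _ _ (by simpa [Fin.castSucc_inj] using hne) (Fin.castSucc_lt_last i).ne,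
        extLast_castSucc, Fin.castSucc_le_castSucc_iff]
      simp [hne]
  rw [hcong]
  by_cases h : i₀ ≤ σ i₀
  · rw [if_pos h, weakExcedences]
    congr 1
    apply filter_congr
    intro i _
    constructor
    · rintro (rfl | hi) <;> [exact h; exact hi]
    · exact Or.inr
  · rw [if_neg h, weakExcedences, filter_or, filter_eq']
    simp only [mem_univ, if_pos]
    rw [show ({i₀} ∪ filter (fun i => i ≤ σ i) univ : Finset (Fin n))
        = insert i₀ (filter (fun i => i ≤ σ i) univ) from rfl,
      card_insert_of_notMem (by simp [h])]

lemma wE_le (σ : Perm (Fin n)) : weakExcedences σ ≤ n := by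
  calc (univ.filter fun i : Fin n => i ≤ σ i).card ≤ (univ : Finset (Fin n)).card :=
        card_filter_le _ _
    _ = n := by simp

lemma wE_pos (σ : Perm (Fin (n + 1))) : 1 ≤ weakExcedences σ := by
  rw [weakExcedences]
  refine card_pos.2 ⟨σ.symm (Fin.last n), ?_⟩
  simp [Fin.le_last]

lemma count_j (σ : Perm (Fin n)) (k : ℕ) :
    (univ.filter fun j : Fin (n + 1) => weakExcedences (ins σ j) = k).card
      = (if weakExcedences σ = k then k else 0)
        + (if weakExcedences σ + 1 = k then n + 1 - weakExcedences σ else 0) := by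
  rw [card_filter_castSucc, wE_ins_last]
  by_cases h1 : weakExcedences σ = k
  · have h2 : ¬ (weakExcedences σ + 1 = k) := by omega
    rw [if_neg h2, if_pos h1, if_neg h2, add_zero, add_zero]
    have : (univ.filter fun i : Fin n => weakExcedences (ins σ i.castSucc) = k)
        = univ.filter fun i : Fin n => i ≤ σ i := by
      apply filter_congr
      intro i _
      rw [wE_ins_castSucc]
      split_ifs with h
      · simp [h1, h]
      · simp [h2, h]
    rw [this]
    exact h1 ▸ rfl
  · rw [if_neg h1, zero_add]
    by_cases h2 : weakExcedences σ + 1 = k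
    · rw [if_pos h2, if_pos h2]
      have : (univ.filter fun i : Fin n => weakExcedences (ins σ i.castSucc) = k)
          = univ.filter fun i : Fin n => ¬ (i ≤ σ i) := by
        apply filter_congr
        intro i _
        rw [wE_ins_castSucc]
        split_ifs with h
        · simp [h1, h]
        · simp [h2, h]
      rw [this, filter_not, card_sdiff_of_subset (filter_subset _ _)]
      have hle : weakExcedences σ ≤ n := wE_le σ
      have : (univ : Finset (Fin n)).card = n := by simp
      rw [this]
      show n - weakExcedences σ + 1 = n + 1 - weakExcedences σ
      omega
    · rw [if_neg h2, if_neg h2, add_zero]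
      have : (univ.filter fun i : Fin n => weakExcedences (ins σ i.castSucc) = k) = ∅ := by
        rw [filter_eq_empty_iff]
        intro i _
        rw [wE_ins_castSucc]
        split_ifs with h
        · exact h1
        · exact h2
      rw [this, card_empty]

/-- The number of permutations of `Fin n` with exactly `k` weak excedences. -/
def N (n k : ℕ) : ℕ := (univ.filter fun π : Perm (Fin n) => weakExcedences π = k).card

lemma N_zero_right (hn : 1 ≤ n) : N n 0 = 0 := by
  cases n with
  | zero => omega
  | succ m =>
    rw [N, card_eq_zero, filter_eq_empty_iff]
    intro σ _
    have := wE_pos σ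
    omega

lemma N_gt (h : n < k) : N n k = 0 := by
  rw [N, card_eq_zero, filter_eq_empty_iff]
  intro σ _
  have := wE_le σ
  omega

lemma N_zero_zero : N 0 0 = 1 := by
  rw [N]
  have h1 : (univ.filter fun π : Perm (Fin 0) => weakExcedences π = 0) = univ := by
    apply filter_true_of_mem
    intro π _
    simp [weakExcedences]
  rw [h1, card_univ, Fintype.card_perm]
  simp

lemma N_rec (n k : ℕ) (hk : 1 ≤ k) :
    N (n + 1) k = k * N n k + (n + 2 - k) * N n (k - 1) := by
  have step1 : N (n + 1) k
      = (univ.filter fun p : Perm (Fin n) × Fin (n + 1) => weakExcedences (ins p.1 p.2) = k).card := by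
    rw [N]
    refine (Finset.card_bij (fun p _ => ins p.1 p.2) ?_ ?_ ?_).symm
    · intro p hp; simpa using (mem_filter.1 hp).2
    · intro p hp q hq h
      exact ins_injective h
    · intro π hπ
      obtain ⟨p, hp⟩ := ins_bijective.2 π
      exact ⟨p, by simp [hp, (mem_filter.1 hπ).2], hp⟩
  have step2 : (univ.filter fun p : Perm (Fin n) × Fin (n + 1) => weakExcedences (ins p.1 p.2) = k).card
      = ∑ σ : Perm (Fin n), (univ.filter fun j : Fin (n + 1) => weakExcedences (ins σ j) = k).card := by
    rw [Finset.card_eq_sum_card_fiberwise (f := Prod.fst) (t := univ) (fun p _ => mem_univ _)]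
    refine Finset.sum_congr rfl fun σ _ => ?_
    refine Finset.card_bij (fun p _ => p.2) ?_ ?_ ?_
    · intro p hp
      simp only [mem_filter, mem_univ, true_and] at hp ⊢
      rw [← hp.2]; exact hp.1
    · intro p hp q hq h
      simp only [mem_filter] at hp hq
      exact Prod.ext (hp.2.trans hq.2.symm) h
    · intro j hj
      simp only [mem_filter, mem_univ, true_and] at hj
      exact ⟨(σ, j), by simp [hj], rfl⟩
  rw [step1, step2]
  have step3 : ∀ σ : Perm (Fin n),
      (univ.filter fun j : Fin (n + 1) => weakExcedences (ins σ j) = k).card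
        = (if weakExcedences σ = k then k else 0)
          + (if weakExcedences σ = k - 1 then n + 2 - k else 0) := by
    intro σ
    rw [count_j]
    congr 1
    by_cases h : weakExcedences σ + 1 = k
    · rw [if_pos h, if_pos (by omega)]
      omega
    · rw [if_neg h, if_neg (by omega)]
  simp only [step3]
  rw [Finset.sum_add_distrib]
  congr 1
  · rw [← Finset.sum_filter, Finset.sum_const, smul_eq_mul, N, mul_comm]
  · rw [← Finset.sum_filter, Finset.sum_const, smul_eq_mul, N, mul_comm]

/-- The explicit formula. -/
def F (n k : ℕ) : ℤ :=
  ∑ i ∈ Finset.range (k + 1), (-1 : ℤ) ^ i * ((n + 1).choose i : ℤ) * ((k - i : ℕ) : ℤ) ^ n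

lemma F_zero (n : ℕ) : F n 0 = if n = 0 then 1 else 0 := by
  rw [F]
  rw [Finset.range_one, Finset.sum_singleton]
  cases n <;> simp

lemma choose_id (n k m : ℕ) :
    ((k : ℤ) - (m + 1)) * ((n + 2).choose (m + 1) : ℤ)
      = k * ((n + 1).choose (m + 1) : ℤ) - ((n : ℤ) + 2 - k) * ((n + 1).choose m : ℤ) := by
  have hpascal : ((n + 2).choose (m + 1) : ℤ)
      = ((n + 1).choose m : ℤ) + ((n + 1).choose (m + 1) : ℤ) := by
    rw [show n + 2 = (n + 1) + 1 from rfl, Nat.choose_succ_succ (n + 1) m]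
    push_cast; ring
  have hmul : ((m : ℤ) + 1) * ((n + 1).choose (m + 1) : ℤ)
      = ((n : ℤ) + 1 - m) * ((n + 1).choose m : ℤ) := by
    by_cases h : m ≤ n + 1
    · have := Nat.choose_succ_right_eq (n + 1) m
      have hcast : (((n + 1 - m : ℕ) : ℤ)) = (n : ℤ) + 1 - m := by
        omega
      calc ((m : ℤ) + 1) * ((n + 1).choose (m + 1) : ℤ)
          = (((n + 1).choose (m + 1) * (m + 1) : ℕ) : ℤ) := by push_cast; ring
        _ = (((n + 1).choose m * (n + 1 - m) : ℕ) : ℤ) := by rw [this]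
        _ = ((n : ℤ) + 1 - m) * ((n + 1).choose m : ℤ) := by push_cast [hcast]; ring
    · have h1 : (n + 1).choose (m + 1) = 0 := Nat.choose_eq_zero_of_lt (by omega)
      have h2 : (n + 1).choose m = 0 := Nat.choose_eq_zero_of_lt (by omega)
      rw [h1, h2]; push_cast; ring
  rw [hpascal]
  linarith [hmul]

lemma F_rec (n k : ℕ) (hk : 1 ≤ k) :
    F (n + 1) k = (k : ℤ) * F n k + ((n : ℤ) + 2 - k) * F n (k - 1) := by
  obtain ⟨m, rfl⟩ : ∃ m, k = m + 1 := ⟨k - 1, by omega⟩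
  rw [show m + 1 - 1 = m from rfl]
  have hterm : ∀ i ∈ Finset.range (m + 1),
      (-1 : ℤ) ^ (i + 1) * ((n + 1 + 1).choose (i + 1) : ℤ) * ((m + 1 - (i + 1) : ℕ) : ℤ) ^ (n + 1)
        = ((m : ℤ) + 1) * ((-1 : ℤ) ^ (i + 1) * ((n + 1).choose (i + 1) : ℤ) * ((m + 1 - (i + 1) : ℕ) : ℤ) ^ n)
          + ((n : ℤ) + 2 - ((m : ℤ) + 1)) * ((-1 : ℤ) ^ i * ((n + 1).choose i : ℤ) * ((m - i : ℕ) : ℤ) ^ n) := by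
    intro i hi
    rw [Finset.mem_range] at hi
    have h1 : m + 1 - (i + 1) = m - i := by omega
    have h2 : ((m - i : ℕ) : ℤ) = (m : ℤ) - i := by omega
    have hch := choose_id n (m + 1) i
    have h3 : (((m + 1 : ℕ) : ℤ) - ((i : ℤ) + 1)) = (m : ℤ) - i := by push_cast; ring
    rw [h3] at hch
    rw [h1, h2]
    push_cast at hch ⊢
    linear_combination ((-1 : ℤ)) ^ (i + 1) * ((m : ℤ) - i) ^ n * hch
  rw [F, F, F]
  rw [Finset.sum_range_succ' (fun i => (-1 : ℤ) ^ i * ((n + 1 + 1).choose i : ℤ) * ((m + 1 - i : ℕ) : ℤ) ^ (n + 1)) (m + 1)]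
  rw [Finset.sum_range_succ' (fun i => (-1 : ℤ) ^ i * ((n + 1).choose i : ℤ) * ((m + 1 - i : ℕ) : ℤ) ^ n) (m + 1)]
  rw [Finset.sum_congr rfl hterm, Finset.sum_add_distrib, ← Finset.mul_sum, ← Finset.mul_sum]
  simp only [Nat.choose_zero_right]
  push_cast
  ring

lemma F_vanish : ∀ n k : ℕ, n + 1 ≤ k → F n k = 0 := by
  intro n
  induction n with
  | zero =>
    intro k hk
    rw [F]
    have hsub : Finset.range 2 ⊆ Finset.range (k + 1) := by
      apply Finset.range_subset_range.2; omega
    rw [← Finset.sum_subset hsub (fun x _ hx => ?_)]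
    · simp [Finset.sum_range_succ]
    · rw [Finset.mem_range, not_lt] at hx
      have : Nat.choose 1 x = 0 := Nat.choose_eq_zero_of_lt (by omega)
      simp [this]
  | succ n ih =>
    intro k hk
    rw [F_rec n k (by omega), ih k (by omega), ih (k - 1) (by omega)]
    ring

lemma main : ∀ n k : ℕ, 1 ≤ k → k ≤ n → ((N n k : ℕ) : ℤ) = F n k := by
  intro n
  induction n with
  | zero => intro k h1 h2; omega
  | succ n ih =>
    intro k h1 h2
    have e1 : ((N n k : ℕ) : ℤ) = F n k := by
      rcases Nat.lt_or_ge n k with h | h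
      · rw [N_gt h, F_vanish n k (by omega)]; simp
      · exact ih k h1 h
    have e2 : ((N n (k - 1) : ℕ) : ℤ) = F n (k - 1) := by
      rcases Nat.lt_or_ge 1 k with h | h
      · exact ih (k - 1) (by omega) (by omega)
      · have hk1 : k = 1 := by omega
        subst hk1
        rw [show (1 : ℕ) - 1 = 0 from rfl, F_zero]
        cases n with
        | zero => rw [N_zero_zero]; simp
        | succ n => rw [N_zero_right (by omega)]; simp
    have hc : ((n + 2 - k : ℕ) : ℤ) = (n : ℤ) + 2 - k := by omega
    have hcast : ((N (n + 1) k : ℕ) : ℤ)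
        = (k : ℤ) * ((N n k : ℕ) : ℤ) + ((n : ℤ) + 2 - k) * ((N n (k - 1) : ℕ) : ℤ) := by
      rw [N_rec n k h1]
      push_cast [hc]
      ring
    rw [hcast, e1, e2, ← F_rec n k h1]

end EulerAux

theorem eulerian_explicit_formula (n k : ℕ) (hk : 1 ≤ k) (hkn : k ≤ n) :
    (Nat.card {π : Equiv.Perm (Fin n) // weakExcedences π = k} : ℤ) =
      ∑ i ∈ Finset.range (k + 1),
        (-1 : ℤ) ^ i * ((n + 1).choose i : ℤ) * ((k - i : ℕ) : ℤ) ^ n := by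
  have h1 : Nat.card {π : Equiv.Perm (Fin n) // weakExcedences π = k} = EulerAux.N n k := by
    rw [Nat.card_eq_fintype_card, Fintype.card_subtype]
    rfl
  have h2 := EulerAux.main n k hk hkn
  rw [EulerAux.F] at h2
  rw [h1]
  exact h2
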